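/- Let (f̄_n)_{n≥1} be positive reals with f̄_n → 1, ∑_n (1 − f̄_n)_+ = ∞, ∑_n (f̄_n − 1)_+ < ∞, and let A : ℕ → ℕ be nondecreasing with A(n) → ∞ and n · ∏_{j=1}^{A(n)} f̄_j → 1. Then for all reals 0 < ε ≤ m: limsup_{n→∞} ∑_{k=A(⌊nε⌋)}^{A(⌊nm⌋)} |1 − f̄_k| ≤ log(m/ε). -/

import Mathlib

open Filter Finset


set_option maxHeartbeats 1000000 in
theorem stmt16 (fbar : ℕ → ℝ) (A : ℕ → ℕ)
    (hpos : ∀ n, 1 ≤ n → 0 < fbar n)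
    (hlim : Tendsto fbar atTop (nhds 1))
    (hdiv : ¬ Summable (fun n => max (1 - fbar n) 0))
    (hsum : Summable (fun n => max (fbar n - 1) 0))
    (hA : Monotone A) (hAtop : Tendsto A atTop atTop)
    (hAn : Tendsto (fun n : ℕ => (n : ℝ) * ∏ j ∈ Finset.Icc 1 (A n), fbar j) atTop (nhds 1))
    (ε m : ℝ) (hε : 0 < ε) (hεm : ε ≤ m) :
    Filter.limsup (fun n : ℕ =>
        ∑ k ∈ Finset.Icc (A ⌊(n : ℝ) * ε⌋₊) (A ⌊(n : ℝ) * m⌋₊), |1 - fbar k|) atTop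
      ≤ Real.log (m / ε) := by
  have hm : 0 < m := hε.trans_le hεm
  set a : ℕ → ℕ := fun n => A ⌊(n : ℝ) * ε⌋₊ with ha_def
  set b : ℕ → ℕ := fun n => A ⌊(n : ℝ) * m⌋₊ with hb_def
  set P : ℕ → ℝ := fun n => ∏ j ∈ Finset.Icc 1 n, fbar j with hP_def
  have hP : ∀ n, 0 < P n := fun n =>
    Finset.prod_pos fun j hj => hpos j (Finset.mem_Icc.1 hj).1
  have hab : ∀ n, a n ≤ b n := fun n =>
    hA (Nat.floor_mono (mul_le_mul_of_nonneg_left hεm (Nat.cast_nonneg n)))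
  -- floor maps tend to atTop
  have hflε : Tendsto (fun n : ℕ => ⌊(n : ℝ) * ε⌋₊) atTop atTop := by
    have := tendsto_nat_floor_mul_atTop ε hε
    simpa [mul_comm] using this
  have hflm : Tendsto (fun n : ℕ => ⌊(n : ℝ) * m⌋₊) atTop atTop := by
    have := tendsto_nat_floor_mul_atTop m hm
    simpa [mul_comm] using this
  have ha_top : Tendsto a atTop atTop := hAtop.comp hflε
  have hb_top : Tendsto b atTop atTop := hAtop.comp hflm
  -- Term 1: |1 - fbar (a n)| → 0
  have hT1 : Tendsto (fun n => |1 - fbar (a n)|) atTop (nhds 0) := by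
    have h1 : Tendsto (fun n => fbar (a n)) atTop (nhds 1) := hlim.comp ha_top
    have h2 : Tendsto (fun n => 1 - fbar (a n)) atTop (nhds 0) := by
      simpa using (tendsto_const_nhds (x := (1:ℝ))).sub h1
    simpa using h2.abs
  -- Term 3: tail sums of max (fbar k - 1) 0 → 0
  have hT3 : Tendsto (fun n => ∑ k ∈ Finset.Icc (a n + 1) (b n), max (fbar k - 1) 0)
      atTop (nhds 0) := by
    have hS : Tendsto (fun N => ∑ k ∈ Finset.range N, max (fbar k - 1) 0) atTop
        (nhds (∑' k, max (fbar k - 1) 0)) := hsum.hasSum.tendsto_sum_nat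
    have heq : ∀ n, ∑ k ∈ Finset.Icc (a n + 1) (b n), max (fbar k - 1) 0
        = (∑ k ∈ Finset.range (b n + 1), max (fbar k - 1) 0)
          - ∑ k ∈ Finset.range (a n + 1), max (fbar k - 1) 0 := by
      intro n
      rw [← Finset.Ico_add_one_right_eq_Icc, Finset.sum_Ico_eq_sub _ (m := a n + 1) (n := b n + 1) (Nat.succ_le_succ (hab n))]
    have h1 : Tendsto (fun n => ∑ k ∈ Finset.range (b n + 1), max (fbar k - 1) 0) atTop
        (nhds (∑' k, max (fbar k - 1) 0)) :=
      hS.comp ((tendsto_add_atTop_nat 1).comp hb_top)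
    have h2 : Tendsto (fun n => ∑ k ∈ Finset.range (a n + 1), max (fbar k - 1) 0) atTop
        (nhds (∑' k, max (fbar k - 1) 0)) :=
      hS.comp ((tendsto_add_atTop_nat 1).comp ha_top)
    have := h1.sub h2
    rw [sub_self] at this
    exact Tendsto.congr (fun n => (heq n).symm) this
  -- the product over Ioc (a n) (b n) tends to ε / m
  have hprod : Tendsto (fun n => ∏ k ∈ Finset.Icc (a n + 1) (b n), fbar k) atTop
      (nhds (ε / m)) := by
    have hx : Tendsto (fun n : ℕ => (⌊(n : ℝ) * ε⌋₊ : ℝ) * P (a n)) atTop (nhds 1) :=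
      hAn.comp hflε
    have hy : Tendsto (fun n : ℕ => (⌊(n : ℝ) * m⌋₊ : ℝ) * P (b n)) atTop (nhds 1) :=
      hAn.comp hflm
    have hr1 : Tendsto (fun n : ℕ => (⌊(n : ℝ) * ε⌋₊ : ℝ) / n) atTop (nhds ε) := by
      have := (tendsto_nat_floor_mul_div_atTop hε.le).comp tendsto_natCast_atTop_atTop (α := ℕ)
      simpa [Function.comp_def, mul_comm] using this
    have hr2 : Tendsto (fun n : ℕ => (⌊(n : ℝ) * m⌋₊ : ℝ) / n) atTop (nhds m) := by
      have := (tendsto_nat_floor_mul_div_atTop hm.le).comp tendsto_natCast_atTop_atTop (α := ℕ)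
      simpa [Function.comp_def, mul_comm] using this
    have hr : Tendsto (fun n : ℕ => (⌊(n : ℝ) * ε⌋₊ : ℝ) / (⌊(n : ℝ) * m⌋₊ : ℝ)) atTop
        (nhds (ε / m)) := by
      have hdiv2 := hr1.div hr2 hm.ne'
      apply hdiv2.congr'
      filter_upwards [eventually_gt_atTop 0, hflm.eventually (eventually_gt_atTop 0)]
        with n hn hn2
      have hn' : (n : ℝ) ≠ 0 := Nat.cast_ne_zero.2 hn.ne'
      have hn2' : (⌊(n : ℝ) * m⌋₊ : ℝ) ≠ 0 := Nat.cast_ne_zero.2 hn2.ne'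
      simp only [Pi.div_apply]
      field_simp
    have hmain : Tendsto (fun n : ℕ =>
        ((⌊(n : ℝ) * m⌋₊ : ℝ) * P (b n)) / ((⌊(n : ℝ) * ε⌋₊ : ℝ) * P (a n))
          * ((⌊(n : ℝ) * ε⌋₊ : ℝ) / (⌊(n : ℝ) * m⌋₊ : ℝ))) atTop
        (nhds (1 / 1 * (ε / m))) := (hy.div hx one_ne_zero).mul hr
    rw [show (1 : ℝ) / 1 * (ε / m) = ε / m by norm_num] at hmain
    apply hmain.congr'
    filter_upwards [hflε.eventually (eventually_gt_atTop 0),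
      hflm.eventually (eventually_gt_atTop 0)] with n h1 h2
    have h1' : (⌊(n : ℝ) * ε⌋₊ : ℝ) ≠ 0 := Nat.cast_ne_zero.2 h1.ne'
    have h2' : (⌊(n : ℝ) * m⌋₊ : ℝ) ≠ 0 := Nat.cast_ne_zero.2 h2.ne'
    have hPa : P (a n) ≠ 0 := (hP (a n)).ne'
    have hsplit : P (a n) * ∏ k ∈ Finset.Ioc (a n) (b n), fbar k = P (b n) := by
      have h0a : 0 ≤ a n := Nat.zero_le _
      have := Finset.prod_Ioc_consecutive fbar h0a (hab n)
      simpa [hP_def, ← Finset.Icc_add_one_left_eq_Ioc] using this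
    rw [Finset.Icc_add_one_left_eq_Ioc]
    have : (∏ k ∈ Finset.Ioc (a n) (b n), fbar k) = P (b n) / P (a n) := by
      rw [← hsplit]; field_simp
    rw [this]
    field_simp
  have hRlog : Tendsto (fun n => - Real.log (∏ k ∈ Finset.Icc (a n + 1) (b n), fbar k))
      atTop (nhds (Real.log (m / ε))) := by
    have := (hprod.log (by positivity : ε / m ≠ 0)).neg
    rwa [show -Real.log (ε / m) = Real.log (m / ε) by
      rw [← Real.log_inv, inv_div]] at this
  -- pointwise bound
  have habs : ∀ x : ℝ, |1 - x| = (1 - x) + 2 * max (x - 1) 0 := by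
    intro x
    rcases le_total x 1 with h | h
    · rw [abs_of_nonneg (by linarith), max_eq_right (by linarith)]; ring
    · rw [abs_of_nonpos (by linarith), max_eq_left (by linarith)]; ring
  have hbound : ∀ n, (∑ k ∈ Finset.Icc (a n) (b n), |1 - fbar k|)
      ≤ |1 - fbar (a n)| + (- Real.log (∏ k ∈ Finset.Icc (a n + 1) (b n), fbar k))
        + 2 * ∑ k ∈ Finset.Icc (a n + 1) (b n), max (fbar k - 1) 0 := by
    intro n
    rw [Finset.Icc_eq_cons_Ioc (hab n), Finset.sum_cons, ← Finset.Icc_add_one_left_eq_Ioc]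
    have hposk : ∀ k ∈ Finset.Icc (a n + 1) (b n), 0 < fbar k := fun k hk =>
      hpos k (le_trans (Nat.succ_le_succ (Nat.zero_le _)) (Finset.mem_Icc.1 hk).1)
    have hlog : - Real.log (∏ k ∈ Finset.Icc (a n + 1) (b n), fbar k)
        = ∑ k ∈ Finset.Icc (a n + 1) (b n), (- Real.log (fbar k)) := by
      rw [Real.log_prod (fun k hk => (hposk k hk).ne'), Finset.sum_neg_distrib]
    have hsum1 : ∑ k ∈ Finset.Icc (a n + 1) (b n), |1 - fbar k|
        = (∑ k ∈ Finset.Icc (a n + 1) (b n), (1 - fbar k))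
          + 2 * ∑ k ∈ Finset.Icc (a n + 1) (b n), max (fbar k - 1) 0 := by
      rw [Finset.mul_sum, ← Finset.sum_add_distrib]
      exact Finset.sum_congr rfl fun k _ => habs (fbar k)
    have hsum2 : (∑ k ∈ Finset.Icc (a n + 1) (b n), (1 - fbar k))
        ≤ - Real.log (∏ k ∈ Finset.Icc (a n + 1) (b n), fbar k) := by
      rw [hlog]
      refine Finset.sum_le_sum fun k hk => ?_
      have := Real.log_le_sub_one_of_pos (hposk k hk)
      linarith
    rw [hsum1]
    linarith
  -- combine
  have hU : Tendsto (fun n => |1 - fbar (a n)|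
      + (- Real.log (∏ k ∈ Finset.Icc (a n + 1) (b n), fbar k))
      + 2 * ∑ k ∈ Finset.Icc (a n + 1) (b n), max (fbar k - 1) 0) atTop
      (nhds (Real.log (m / ε))) := by
    have := (hT1.add hRlog).add ((tendsto_const_nhds (x := (2:ℝ))).mul hT3)
    simpa using this
  have hle : (fun n : ℕ => ∑ k ∈ Finset.Icc (a n) (b n), |1 - fbar k|)
      ≤ᶠ[atTop] fun n => |1 - fbar (a n)|
      + (- Real.log (∏ k ∈ Finset.Icc (a n + 1) (b n), fbar k))
      + 2 * ∑ k ∈ Finset.Icc (a n + 1) (b n), max (fbar k - 1) 0 :=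
    Filter.Eventually.of_forall hbound
  have hcob : IsCoboundedUnder (· ≤ ·) atTop
      (fun n : ℕ => ∑ k ∈ Finset.Icc (a n) (b n), |1 - fbar k|) := by
    exact Filter.isCoboundedUnder_le_of_le atTop (x := 0)
      fun n => Finset.sum_nonneg fun k _ => abs_nonneg (1 - fbar k)
  have hbdd : IsBoundedUnder (· ≤ ·) atTop (fun n => |1 - fbar (a n)|
      + (- Real.log (∏ k ∈ Finset.Icc (a n + 1) (b n), fbar k))
      + 2 * ∑ k ∈ Finset.Icc (a n + 1) (b n), max (fbar k - 1) 0) :=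
    hU.isBoundedUnder_le
  calc Filter.limsup (fun n : ℕ => ∑ k ∈ Finset.Icc (a n) (b n), |1 - fbar k|) atTop
      ≤ Filter.limsup (fun n => |1 - fbar (a n)|
        + (- Real.log (∏ k ∈ Finset.Icc (a n + 1) (b n), fbar k))
        + 2 * ∑ k ∈ Finset.Icc (a n + 1) (b n), max (fbar k - 1) 0) atTop :=
        Filter.limsup_le_limsup hle hcob hbdd
    _ = Real.log (m / ε) := hU.limsup_eq
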